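/- Let P = MvPolynomial (Fin 4) ℤ with variables x₁, x₂, x₃, γ, let eᵢ denote the i-th elementary symmetric polynomial in x₁, x₂, x₃ only, let I be the ideal of P generated by e₁, e₂, e₃ − 2γ, and γ², and let A = P ⧸ I. Then the class of γ in A does not lie in the ℤ-subalgebra of A generated by the classes of x₁, x₂, x₃; in particular A is not generated as a ring by its elements of (cohomological) degree two. -/

import Mathlib

namespace Stmt18

noncomputable section

/-- The polynomial ring `P = ℤ[x₁, x₂, x₃, γ]`. -/
abbrev P := MvPolynomial (Fin 4) ℤ

def x₁ : P := MvPolynomial.X 0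
def x₂ : P := MvPolynomial.X 1
def x₃ : P := MvPolynomial.X 2
def γ : P := MvPolynomial.X 3

/-- The elementary symmetric polynomials in the three variables `x₁, x₂, x₃` only. -/
def e₁ : P := x₁ + x₂ + x₃
def e₂ : P := x₁ * x₂ + x₁ * x₃ + x₂ * x₃
def e₃ : P := x₁ * x₂ * x₃

/-- The ideal `(e₁, e₂, e₃ − 2γ, γ²)`. -/
def I : Ideal P := Ideal.span {e₁, e₂, e₃ - 2 * γ, γ ^ 2}

/-- The quotient ring `A = P ⧸ I`, realizing `H^*(G₂/T; ℤ)`. -/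
abbrev A := P ⧸ I

abbrev R := DualNumber (ZMod 2)

def f : P →ₐ[ℤ] R :=
  MvPolynomial.aeval (fun i => if i = 3 then DualNumber.eps else 0)

lemma f_x1 : f x₁ = 0 := by simp [f, x₁]
lemma f_x2 : f x₂ = 0 := by simp [f, x₂]
lemma f_x3 : f x₃ = 0 := by simp [f, x₃]
lemma f_γ : f γ = DualNumber.eps := by simp [f, γ]

lemma I_le_ker : I ≤ RingHom.ker f.toRingHom := by
  rw [I, Ideal.span_le]
  rintro p hp
  simp only [Set.mem_insert_iff, Set.mem_singleton_iff] at hp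
  have h2 : f 2 = 0 := by
    rw [show (2:P) = algebraMap ℤ P 2 by simp, AlgHom.commutes,
      eq_intCast (algebraMap ℤ R)]
    ext
    · rw [TrivSqZeroExt.fst_intCast, TrivSqZeroExt.fst_zero]; decide
    · rw [TrivSqZeroExt.snd_intCast, TrivSqZeroExt.snd_zero]
  rcases hp with rfl | rfl | rfl | rfl
  · show f e₁ = 0
    simp [e₁, map_add, f_x1, f_x2, f_x3]
  · show f e₂ = 0
    simp [e₂, map_add, map_mul, f_x1, f_x2, f_x3]
  · show f (e₃ - 2 * γ) = 0
    rw [map_sub, map_mul, h2]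
    simp [e₃, map_mul, f_x1]
  · show f (γ ^ 2) = 0
    rw [map_pow, f_γ, sq, DualNumber.eps_mul_eps]

def φ : A →ₐ[ℤ] R := Ideal.Quotient.liftₐ I f (fun a ha => RingHom.mem_ker.1 (I_le_ker ha))

/-- The class of `γ` in `A` does not lie in the `ℤ`-subalgebra of `A` generated by
the classes of `x₁, x₂, x₃`; in particular `A` is not generated as a ring by its
elements of cohomological degree two. -/
theorem gamma_not_in_adjoin_degree_two :
    Ideal.Quotient.mk I γ ∉
      Algebra.adjoin ℤ
        ({Ideal.Quotient.mk I x₁, Ideal.Quotient.mk I x₂, Ideal.Quotient.mk I x₃} :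
          Set A) := by
  intro hmem
  have h1 : φ (Ideal.Quotient.mk I γ) ∈ (Algebra.adjoin ℤ
      ({Ideal.Quotient.mk I x₁, Ideal.Quotient.mk I x₂, Ideal.Quotient.mk I x₃} : Set A)).map φ :=
    Subalgebra.mem_map.2 ⟨_, hmem, rfl⟩
  rw [AlgHom.map_adjoin] at h1
  have himg : φ '' {Ideal.Quotient.mk I x₁, Ideal.Quotient.mk I x₂, Ideal.Quotient.mk I x₃}
      ⊆ ((⊥ : Subalgebra ℤ R) : Set R) := by
    rintro r ⟨a, ha, rfl⟩
    simp only [Set.mem_insert_iff, Set.mem_singleton_iff] at ha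
    rcases ha with rfl | rfl | rfl <;>
      · refine ⟨0, ?_⟩
        simp [φ, Ideal.Quotient.liftₐ_apply, Ideal.Quotient.lift_mk, f_x1, f_x2, f_x3]
        erw [Ideal.Quotient.lift_mk]
        simp [f_x1, f_x2, f_x3]
  have h2 : φ (Ideal.Quotient.mk I γ) ∈ (⊥ : Subalgebra ℤ R) :=
    Algebra.adjoin_le himg h1
  have h3 : φ (Ideal.Quotient.mk I γ) = DualNumber.eps := by
    simp [φ, Ideal.Quotient.liftₐ_apply, Ideal.Quotient.lift_mk, f_γ]
    erw [Ideal.Quotient.lift_mk]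
    simp [f_γ]
  rw [h3, Algebra.mem_bot] at h2
  obtain ⟨n, hn⟩ := h2
  have := congrArg TrivSqZeroExt.snd hn
  simp at this

end

end Stmt18
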